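/- There is no exponent η with 1 ≤ η ≤ 2 such that (∑_{j₁,…,j_m}|T(e_{j₁},…,e_{j_m})|^η)^{1/η} ≤ ‖T‖ holds for all m-linear forms T on (ℓ_pⁿ)^m with p finite and m ≥ 2; indeed any valid η must satisfy η ≥ 2(m−1)/(log₂(sup_{x∈[0,1]} ((1+x)^{p*}+(1−x)^{p*})^{1/p*}/(1+x^p)^{1/p}) + (m−2)) > 2. -/

import Mathlib

open Real Finset Set

open Real Finset

lemma rpow_superadd_strict {a b q : ℝ} (ha : 0 < a) (hb : 0 < b) (hq : 1 < q) :
    a ^ q + b ^ q < (a + b) ^ q := by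
  have hab : 0 < a + b := by linarith
  have hq1 : 0 < q - 1 := by linarith
  have h1 : ∀ c : ℝ, 0 < c → c ^ q = c * c ^ (q - 1) := by
    intro c hc
    rw [show q = 1 + (q - 1) by ring, Real.rpow_add hc, Real.rpow_one]
    ring_nf
  rw [h1 a ha, h1 b hb, h1 _ hab]
  have hlta : a ^ (q - 1) < (a + b) ^ (q - 1) :=
    Real.rpow_lt_rpow ha.le (by linarith) hq1
  have hltb : b ^ (q - 1) < (a + b) ^ (q - 1) :=
    Real.rpow_lt_rpow hb.le (by linarith) hq1
  calc a * a ^ (q - 1) + b * b ^ (q - 1)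
      < a * (a + b) ^ (q - 1) + b * (a + b) ^ (q - 1) := by
        gcongr <;> assumption
    _ = (a + b) * (a + b) ^ (q - 1) := by ring

lemma rpow_superadd {a b q : ℝ} (ha : 0 ≤ a) (hb : 0 ≤ b) (hq : 1 < q) :
    a ^ q + b ^ q ≤ (a + b) ^ q := by
  rcases ha.eq_or_lt with rfl | ha'
  · simp [Real.zero_rpow (by linarith : q ≠ 0)]
  rcases hb.eq_or_lt with rfl | hb'
  · simp [Real.zero_rpow (by linarith : q ≠ 0)]
  exact (rpow_superadd_strict ha' hb' hq).le




section
variable {p : ℝ} (hp : 1 < p)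

private noncomputable def fio (p x : ℝ) : ℝ :=
  ((1 + x) ^ (p / (p - 1)) + (1 - x) ^ (p / (p - 1))) ^ ((p - 1) / p)
    / (1 + x ^ p) ^ (1 / p)

include hp

lemma fio_lt_two {x : ℝ} (hx : x ∈ Icc (0:ℝ) 1) : fio p x < 2 := by
  have hp0 : (0:ℝ) < p := by linarith
  have hp1 : (0:ℝ) < p - 1 := by linarith
  have hps1 : 1 < p / (p - 1) := (one_lt_div hp1).2 (by linarith)
  have hr0 : (0:ℝ) < (p - 1) / p := div_pos hp1 hp0
  have hr1 : (p - 1) / p < 1 := (div_lt_one hp0).2 (by linarith)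
  have hxp : (0:ℝ) ≤ x ^ p := Real.rpow_nonneg hx.1 _
  have hden1 : (1:ℝ) ≤ (1 + x ^ p) ^ (1 / p) :=
    Real.one_le_rpow (by linarith) (by positivity)
  have hden0 : (0:ℝ) < (1 + x ^ p) ^ (1 / p) := by linarith
  rcases lt_or_eq_of_le hx.2 with hx1 | hx1
  · -- x < 1 : numerator < 2
    have hnum : (1 + x) ^ (p / (p - 1)) + (1 - x) ^ (p / (p - 1)) < 2 ^ (p / (p - 1)) := by
      have h := rpow_superadd_strict (a := 1 + x) (b := 1 - x)
        (by linarith [hx.1]) (by linarith) hps1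
      rw [show (1 + x) + (1 - x) = (2:ℝ) by ring] at h
      exact h
    have hA : (0:ℝ) ≤ (1 + x) ^ (p / (p - 1)) := Real.rpow_nonneg (by linarith [hx.1]) _
    have hB : (0:ℝ) ≤ (1 - x) ^ (p / (p - 1)) := Real.rpow_nonneg (by linarith) _
    have h2 : ((1 + x) ^ (p / (p - 1)) + (1 - x) ^ (p / (p - 1))) ^ ((p - 1) / p)
        < (2 ^ (p / (p - 1))) ^ ((p - 1) / p) := by
      apply Real.rpow_lt_rpow (by positivity) hnum hr0
    have h3 : ((2:ℝ) ^ (p / (p - 1))) ^ ((p - 1) / p) = 2 := by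
      rw [← Real.rpow_mul (by norm_num)]
      rw [show p / (p - 1) * ((p - 1) / p) = 1 by field_simp]
      exact Real.rpow_one 2
    have : fio p x ≤ ((1 + x) ^ (p / (p - 1)) + (1 - x) ^ (p / (p - 1))) ^ ((p - 1) / p) := by
      unfold fio
      exact div_le_self (Real.rpow_nonneg (by linarith) _) hden1
    calc fio p x ≤ _ := this
      _ < 2 := by rw [h3] at h2; exact h2
  · -- x = 1
    subst hx1
    unfold fio
    have h10 : (1 - (1:ℝ)) ^ (p / (p - 1)) = 0 := by
      rw [sub_self, Real.zero_rpow (by positivity)]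
    have h1p : (1:ℝ) ^ p = 1 := Real.one_rpow p
    rw [h10, h1p, add_zero]
    have hnum : ((1:ℝ) + 1) ^ (p / (p - 1)) = 2 ^ (p / (p - 1)) := by norm_num
    rw [hnum, ← Real.rpow_mul (by norm_num : (0:ℝ) ≤ 2),
      show p / (p - 1) * ((p - 1) / p) = 1 by field_simp, Real.rpow_one]
    have hd : (1:ℝ) < (1 + 1 : ℝ) ^ (1 / p) := by
      apply Real.one_lt_rpow (by norm_num) (by positivity)
    rw [div_lt_iff₀ (by linarith)]
    nlinarith

lemma fio_nonneg {x : ℝ} (hx : x ∈ Icc (0:ℝ) 1) : 0 ≤ fio p x := by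
  have hp0 : (0:ℝ) < p := by linarith
  have hxp : (0:ℝ) ≤ x ^ p := Real.rpow_nonneg hx.1 _
  have hA : (0:ℝ) ≤ (1 + x) ^ (p / (p - 1)) := Real.rpow_nonneg (by linarith [hx.1]) _
  have hB : (0:ℝ) ≤ (1 - x) ^ (p / (p - 1)) := Real.rpow_nonneg (by linarith [hx.2]) _
  unfold fio
  have hden : (0:ℝ) ≤ (1 + x ^ p) ^ (1 / p) := Real.rpow_nonneg (by linarith) _
  have hnum : (0:ℝ) ≤ ((1 + x) ^ (p / (p - 1)) + (1 - x) ^ (p / (p - 1))) ^ ((p - 1) / p) :=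
    Real.rpow_nonneg (by linarith) _
  positivity

lemma fio_continuousOn : ContinuousOn (fio p) (Icc (0:ℝ) 1) := by
  have hp0 : (0:ℝ) < p := by linarith
  have hp1 : (0:ℝ) < p - 1 := by linarith
  have hps0 : (0:ℝ) < p / (p - 1) := by positivity
  have hr0 : (0:ℝ) < (p - 1) / p := by positivity
  have c1 : Continuous fun x : ℝ => x ^ (p / (p - 1)) :=
    continuous_iff_continuousAt.2 fun x => Real.continuousAt_rpow_const x _ (Or.inr hps0.le)
  have c2 : Continuous fun x : ℝ => x ^ ((p - 1) / p) :=
    continuous_iff_continuousAt.2 fun x => Real.continuousAt_rpow_const x _ (Or.inr hr0.le)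
  have c3 : Continuous fun x : ℝ => x ^ p :=
    continuous_iff_continuousAt.2 fun x => Real.continuousAt_rpow_const x _ (Or.inr hp0.le)
  have c4 : Continuous fun x : ℝ => x ^ (1 / p) :=
    continuous_iff_continuousAt.2 fun x => Real.continuousAt_rpow_const x _ (Or.inr (by positivity : (0:ℝ) ≤ 1/p))
  apply ContinuousOn.div
  · exact (c2.comp ((c1.comp (continuous_const.add continuous_id)).add
      (c1.comp (continuous_const.sub continuous_id)))).continuousOn
  · exact (c4.comp (continuous_const.add c3)).continuousOn
  · intro x hx
    have hxp : (0:ℝ) ≤ x ^ p := Real.rpow_nonneg hx.1 _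
    have : (1:ℝ) ≤ (1 + x ^ p) ^ (1 / p) :=
      Real.one_le_rpow (by linarith) (by positivity)
    positivity

end

section
variable {p : ℝ} (hp : 1 < p)
include hp

lemma fio_bddAbove : BddAbove (Set.range fun x : Icc (0:ℝ) 1 => fio p x) := by
  refine ⟨2, ?_⟩
  rintro _ ⟨x, rfl⟩
  exact (fio_lt_two hp x.2).le

lemma fio_zero : fio p 0 = 2 ^ ((p - 1) / p) := by
  have hp0 : (0:ℝ) < p := by linarith
  unfold fio
  norm_num [Real.zero_rpow hp0.ne', Real.one_rpow]

lemma one_lt_sup_fio : 1 < ⨆ x : Icc (0:ℝ) 1, fio p x := by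
  have hp0 : (0:ℝ) < p := by linarith
  have hp1 : (0:ℝ) < p - 1 := by linarith
  have h0 : fio p 0 ≤ ⨆ x : Icc (0:ℝ) 1, fio p x :=
    le_ciSup (fio_bddAbove hp) ⟨0, by norm_num⟩
  have : (1:ℝ) < 2 ^ ((p - 1) / p) :=
    Real.one_lt_rpow (by norm_num) (by positivity)
  rw [fio_zero hp] at h0
  linarith

lemma sup_fio_lt_two : (⨆ x : Icc (0:ℝ) 1, fio p x) < 2 := by
  obtain ⟨x₀, hx₀, hmax⟩ := isCompact_Icc.exists_isMaxOn (nonempty_Icc.2 zero_le_one)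
    (fio_continuousOn hp)
  have h1 : (⨆ x : Icc (0:ℝ) 1, fio p x) ≤ fio p x₀ :=
    ciSup_le fun y => hmax y.2
  exact h1.trans_lt (fio_lt_two hp hx₀)

lemma fio_le_sup {t : ℝ} (ht : t ∈ Icc (0:ℝ) 1) :
    fio p t ≤ ⨆ x : Icc (0:ℝ) 1, fio p x :=
  le_ciSup (fio_bddAbove hp) ⟨t, ht⟩

lemma core' {u v : ℝ} (hv : 0 ≤ v) (hvu : v ≤ u) :
    ((u + v) ^ (p / (p - 1)) + (u - v) ^ (p / (p - 1))) ^ ((p - 1) / p)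
      ≤ (⨆ x : Icc (0:ℝ) 1, fio p x) * (u ^ p + v ^ p) ^ (1 / p) := by
  have hp0 : (0:ℝ) < p := by linarith
  have hp1 : (0:ℝ) < p - 1 := by linarith
  have hu : 0 ≤ u := hv.trans hvu
  have hS0 : (0:ℝ) < ⨆ x : Icc (0:ℝ) 1, fio p x := lt_trans one_pos (one_lt_sup_fio hp)
  have hps0 : (0:ℝ) < p / (p - 1) := by positivity
  have hr0 : (0:ℝ) < (p - 1) / p := by positivity
  rcases hu.eq_or_lt with rfl | hu'
  · have hv0 : v = 0 := le_antisymm hvu hv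
    subst hv0
    norm_num [Real.zero_rpow hps0.ne', Real.zero_rpow hp0.ne',
      Real.zero_rpow hr0.ne', Real.zero_rpow (show p⁻¹ ≠ 0 by positivity)]
  · set t : ℝ := v / u with htdef
    have ht : t ∈ Icc (0:ℝ) 1 := ⟨div_nonneg hv hu, (div_le_one hu').2 hvu⟩
    have huv : u + v = u * (1 + t) := by rw [htdef]; field_simp
    have huv' : u - v = u * (1 - t) := by rw [htdef]; field_simp
    have hvt : v = u * t := by rw [htdef]; field_simp
    have h1t : (0:ℝ) ≤ 1 + t := by linarith [ht.1]
    have h1t' : (0:ℝ) ≤ 1 - t := by linarith [ht.2]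
    have e1 : (u + v) ^ (p / (p - 1)) = u ^ (p / (p - 1)) * (1 + t) ^ (p / (p - 1)) := by
      rw [huv, Real.mul_rpow hu'.le h1t]
    have e2 : (u - v) ^ (p / (p - 1)) = u ^ (p / (p - 1)) * (1 - t) ^ (p / (p - 1)) := by
      rw [huv', Real.mul_rpow hu'.le h1t']
    have e3 : v ^ p = u ^ p * t ^ p := by
      rw [hvt, Real.mul_rpow hu'.le ht.1]
    have hNn : (0:ℝ) ≤ (1 + t) ^ (p / (p - 1)) + (1 - t) ^ (p / (p - 1)) := by
      have := Real.rpow_nonneg h1t (p / (p - 1))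
      have := Real.rpow_nonneg h1t' (p / (p - 1))
      linarith
    have htp : (0:ℝ) ≤ t ^ p := Real.rpow_nonneg ht.1 _
    have eL : ((u + v) ^ (p / (p - 1)) + (u - v) ^ (p / (p - 1))) ^ ((p - 1) / p)
        = u * ((1 + t) ^ (p / (p - 1)) + (1 - t) ^ (p / (p - 1))) ^ ((p - 1) / p) := by
      rw [e1, e2, ← mul_add,
        Real.mul_rpow (Real.rpow_nonneg hu'.le _) hNn,
        ← Real.rpow_mul hu'.le, show p / (p - 1) * ((p - 1) / p) = 1 by field_simp,
        Real.rpow_one]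
    have eR : (u ^ p + v ^ p) ^ (1 / p) = u * (1 + t ^ p) ^ (1 / p) := by
      rw [e3, show u ^ p + u ^ p * t ^ p = u ^ p * (1 + t ^ p) by ring,
        Real.mul_rpow (Real.rpow_nonneg hu'.le _) (by linarith),
        ← Real.rpow_mul hu'.le, show p * (1 / p) = 1 by field_simp, Real.rpow_one]
    rw [eL, eR]
    have hD : (0:ℝ) < (1 + t ^ p) ^ (1 / p) :=
      Real.rpow_pos_of_pos (by linarith) _
    have hfio : ((1 + t) ^ (p / (p - 1)) + (1 - t) ^ (p / (p - 1))) ^ ((p - 1) / p)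
        ≤ (⨆ x : Icc (0:ℝ) 1, fio p x) * (1 + t ^ p) ^ (1 / p) := by
      have h := fio_le_sup hp ht
      unfold fio at h
      rw [div_le_iff₀ hD] at h
      exact h
    calc u * ((1 + t) ^ (p / (p - 1)) + (1 - t) ^ (p / (p - 1))) ^ ((p - 1) / p)
        ≤ u * ((⨆ x : Icc (0:ℝ) 1, fio p x) * (1 + t ^ p) ^ (1 / p)) :=
          mul_le_mul_of_nonneg_left hfio hu'.le
      _ = (⨆ x : Icc (0:ℝ) 1, fio p x) * (u * (1 + t ^ p) ^ (1 / p)) := by ring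

lemma core_nonneg {a b : ℝ} (ha : 0 ≤ a) (hb : 0 ≤ b) :
    (|a + b| ^ (p / (p - 1)) + |a - b| ^ (p / (p - 1))) ^ ((p - 1) / p)
      ≤ (⨆ x : Icc (0:ℝ) 1, fio p x) * (a ^ p + b ^ p) ^ (1 / p) := by
  rcases le_total b a with h | h
  · rw [abs_of_nonneg (by linarith : (0:ℝ) ≤ a + b),
      abs_of_nonneg (by linarith : (0:ℝ) ≤ a - b)]
    exact core' hp hb h
  · rw [abs_of_nonneg (by linarith : (0:ℝ) ≤ a + b), abs_sub_comm,
      abs_of_nonneg (by linarith : (0:ℝ) ≤ b - a),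
      show a + b = b + a by ring, show a ^ p + b ^ p = b ^ p + a ^ p by ring]
    exact core' hp ha h

lemma core (a b : ℝ) :
    (|a + b| ^ (p / (p - 1)) + |a - b| ^ (p / (p - 1))) ^ ((p - 1) / p)
      ≤ (⨆ x : Icc (0:ℝ) 1, fio p x) * (|a| ^ p + |b| ^ p) ^ (1 / p) := by
  have H : |a + b| ^ (p / (p - 1)) + |a - b| ^ (p / (p - 1))
      = (|(|a| + |b|)|) ^ (p / (p - 1)) + (|(|a| - |b|)|) ^ (p / (p - 1)) := by
    rcases le_or_gt 0 a with ha | ha <;> rcases le_or_gt 0 b with hb | hb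
    · rw [show |a| + |b| = a + b by rw [abs_of_nonneg ha, abs_of_nonneg hb],
        show |a| - |b| = a - b by rw [abs_of_nonneg ha, abs_of_nonneg hb],
        abs_of_nonneg (by linarith : (0:ℝ) ≤ a + b)]
    · rw [show |a| + |b| = a - b by rw [abs_of_nonneg ha, abs_of_neg hb]; ring,
        show |a| - |b| = a + b by rw [abs_of_nonneg ha, abs_of_neg hb]; ring]
      ring
    · rw [show |a| + |b| = b - a by rw [abs_of_neg ha, abs_of_nonneg hb]; ring,
        show |a| - |b| = -(a + b) by rw [abs_of_neg ha, abs_of_nonneg hb]; ring,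
        abs_neg, abs_sub_comm b a]
      ring
    · rw [show |a| + |b| = -(a + b) by rw [abs_of_neg ha, abs_of_neg hb]; ring,
        show |a| - |b| = b - a by rw [abs_of_neg ha, abs_of_neg hb]; ring,
        abs_neg, abs_sub_comm b a]
  rw [H]
  exact core_nonneg hp (abs_nonneg a) (abs_nonneg b)

end


/-- Standard basis vector of `ℓ_pⁿ`. -/
noncomputable def stdBasisLp (q : ENNReal) (n : ℕ) (i : Fin n) :
    PiLp q (fun _ : Fin n => ℝ) :=
  (WithLp.equiv q (∀ _ : Fin n, ℝ)).symm (Pi.single i 1)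

/-- For finite `p` (`p > 1`) and `m ≥ 2`, any exponent `η ≥ 1` such that
`(∑|T(e_{j₁},…,e_{j_m})|^η)^{1/η} ≤ ‖T‖` holds for all `m`-linear forms `T` on
`(ℓ_pⁿ)^m` (all `n`) must satisfy
`η ≥ 2(m−1)/(log₂(sup_{x∈[0,1]} ((1+x)^{p*}+(1−x)^{p*})^{1/p*}/(1+x^p)^{1/p}) + (m−2))`,
and this lower bound is `> 2`; in particular no such `η` with `1 ≤ η ≤ 2` exists. -/
theorem stmt19 (p : ℝ) (hp : 1 < p) [Fact (1 ≤ ENNReal.ofReal p)]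
    (m : ℕ) (hm : 2 ≤ m) (η : ℝ) (hη : 1 ≤ η)
    (hineq : ∀ (n : ℕ)
      (T : ContinuousMultilinearMap ℝ
        (fun _ : Fin m => PiLp (ENNReal.ofReal p) (fun _ : Fin n => ℝ)) ℝ),
      (∑ j : Fin m → Fin n,
          |T (fun s => stdBasisLp (ENNReal.ofReal p) n (j s))| ^ η) ^ (1 / η) ≤ ‖T‖) :
    (2 * ((m : ℝ) - 1)) /
        (Real.logb 2 (⨆ x : Set.Icc (0 : ℝ) 1,
          ((1 + (x : ℝ)) ^ (p / (p - 1)) + (1 - (x : ℝ)) ^ (p / (p - 1))) ^ ((p - 1) / p)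
            / (1 + (x : ℝ) ^ p) ^ (1 / p)) + ((m : ℝ) - 2)) ≤ η
      ∧ 2 < (2 * ((m : ℝ) - 1)) /
        (Real.logb 2 (⨆ x : Set.Icc (0 : ℝ) 1,
          ((1 + (x : ℝ)) ^ (p / (p - 1)) + (1 - (x : ℝ)) ^ (p / (p - 1))) ^ ((p - 1) / p)
            / (1 + (x : ℝ) ^ p) ^ (1 / p)) + ((m : ℝ) - 2)) := by
  classical
  have hp0 : (0:ℝ) < p := by linarith
  have hp1 : (0:ℝ) < p - 1 := by linarith
  have hη0 : (0:ℝ) < η := by linarith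
  set S : ℝ := ⨆ x : Set.Icc (0 : ℝ) 1,
      ((1 + (x : ℝ)) ^ (p / (p - 1)) + (1 - (x : ℝ)) ^ (p / (p - 1))) ^ ((p - 1) / p)
        / (1 + (x : ℝ) ^ p) ^ (1 / p) with hSdef
  have hSfio : S = ⨆ x : Set.Icc (0:ℝ) 1, fio p x := rfl
  have hS1 : 1 < S := by rw [hSfio]; exact one_lt_sup_fio hp
  have hS2 : S < 2 := by rw [hSfio]; exact sup_fio_lt_two hp
  have hS0 : (0:ℝ) < S := by linarith
  set L : ℝ := Real.logb 2 S with hLdef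
  have hL0 : 0 < L := Real.logb_pos one_lt_two hS1
  have hL1 : L < 1 := by
    have h := Real.logb_lt_logb (b := 2) one_lt_two hS0 hS2
    simpa using h
  -- KEY STEP : 4 ^ (1/η) ≤ S
  have key : (4:ℝ) ^ (1/η) ≤ S := by
    obtain ⟨k, rfl⟩ : ∃ k, m = k + 2 := ⟨m - 2, by omega⟩
    set q : ENNReal := ENNReal.ofReal p with hq
    have h01 : (0 : Fin (k+2)) ≠ 1 := by simp [Fin.ext_iff]
    set pat : Fin 2 → Fin 2 → (Fin (k+2) → Fin 2) :=
      fun a b s => if s = 0 then a else if s = 1 then b else 0 with hpat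
    have pat0 : ∀ a b, pat a b 0 = a := fun a b => if_pos rfl
    have pat1 : ∀ a b, pat a b 1 = b := fun a b => by
      simp [hpat, h01.symm]
    have patrest : ∀ a b (s : Fin (k+2)), s ≠ 0 → s ≠ 1 → pat a b s = 0 :=
      fun a b s h h' => by simp [hpat, h, h']
    have patinj : ∀ a b a' b' : Fin 2, pat a' b' = pat a b ↔ (a' = a ∧ b' = b) := by
      intro a b a' b'
      constructor
      · intro h
        exact ⟨by rw [← pat0 a' b', h, pat0], by rw [← pat1 a' b', h, pat1]⟩
      · rintro ⟨rfl, rfl⟩; rfl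
    set eps : Fin 2 → Fin 2 → ℝ := fun a b => if a = 1 ∧ b = 1 then -1 else 1 with heps
    have epsabs : ∀ a b, |eps a b| = 1 := by
      intro a b
      by_cases h : a = 1 ∧ b = 1 <;> simp [heps, h]
    set T : ContinuousMultilinearMap ℝ (fun _ : Fin (k+2) => PiLp q (fun _ : Fin 2 => ℝ)) ℝ :=
      ∑ a : Fin 2, ∑ b : Fin 2, eps a b •
        (ContinuousMultilinearMap.mkPiAlgebra ℝ (Fin (k+2)) ℝ).compContinuousLinearMap
          (fun s => PiLp.proj q (fun _ : Fin 2 => ℝ) (pat a b s)) with hT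
    have hTapp : ∀ x : Fin (k+2) → PiLp q (fun _ : Fin 2 => ℝ),
        T x = ∑ a : Fin 2, ∑ b : Fin 2, eps a b * ∏ s, x s (pat a b s) := by
      intro x
      rw [hT, ContinuousMultilinearMap.sum_apply]
      refine Finset.sum_congr rfl fun a _ => ?_
      rw [ContinuousMultilinearMap.sum_apply]
      refine Finset.sum_congr rfl fun b _ => ?_
      rw [ContinuousMultilinearMap.smul_apply, smul_eq_mul]
      rfl
    have hTe : ∀ j : Fin (k+2) → Fin 2,
        T (fun s => stdBasisLp q 2 (j s)) = ∑ a : Fin 2, ∑ b : Fin 2,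
          eps a b * (if pat a b = j then 1 else 0) := by
      intro j
      rw [hTapp]
      refine Finset.sum_congr rfl fun a _ => Finset.sum_congr rfl fun b _ => ?_
      congr 1
      have hb : ∀ s, (stdBasisLp q 2 (j s)) (pat a b s)
          = if pat a b s = j s then (1:ℝ) else 0 := by
        intro s
        rw [stdBasisLp, WithLp.equiv_symm_apply, PiLp.toLp_apply, Pi.single_apply]
      rw [Finset.prod_congr rfl (fun s _ => hb s), Finset.prod_boole]
      have hcond : (∀ s ∈ Finset.univ, pat a b s = j s) ↔ pat a b = j := by
        simp [funext_iff]
      simp only [hcond]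
    have hηne : η ≠ 0 := ne_of_gt hη0
    have hsum : (∑ j : Fin (k+2) → Fin 2,
        |T (fun s => stdBasisLp q 2 (j s))| ^ η) = 4 := by
      set g : Fin 2 × Fin 2 → (Fin (k+2) → Fin 2) := fun ab => pat ab.1 ab.2 with hg
      have hginj : ∀ x ∈ Finset.univ, ∀ y ∈ Finset.univ, g x = g y → x = y := by
        rintro ⟨a, b⟩ - ⟨a', b'⟩ - h
        obtain ⟨h1, h2⟩ := (patinj a' b' a b).1 h
        simp [h1, h2]
      rw [← Finset.sum_subset (Finset.subset_univ (Finset.univ.image g))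
        (fun j _ hj => ?_), Finset.sum_image hginj]
      · have hone : ∀ ab : Fin 2 × Fin 2,
            |T (fun s => stdBasisLp q 2 (g ab s))| ^ η = 1 := by
          rintro ⟨a, b⟩
          rw [hTe]
          have hval : (∑ a' : Fin 2, ∑ b' : Fin 2,
              eps a' b' * (if pat a' b' = pat a b then 1 else 0)) = eps a b := by
            simp only [patinj]
            simp [ite_and, mul_ite, Finset.sum_ite_eq', mul_one, mul_zero]
          rw [hval, epsabs, Real.one_rpow]
        rw [Finset.sum_congr rfl (fun ab _ => hone ab)]
        simp
      · have hzero : T (fun s => stdBasisLp q 2 (j s)) = 0 := by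
          rw [hTe]
          refine Finset.sum_eq_zero fun a _ => Finset.sum_eq_zero fun b _ => ?_
          rw [if_neg, mul_zero]
          intro hco
          exact hj (Finset.mem_image.2 ⟨(a, b), Finset.mem_univ _, hco⟩)
        rw [hzero, abs_zero, Real.zero_rpow hηne]
    -- norm bound
    have hnormV : ∀ y : PiLp q (fun _ : Fin 2 => ℝ),
        ‖y‖ = (|y 0| ^ p + |y 1| ^ p) ^ (1/p) := by
      intro y
      rw [PiLp.norm_eq_sum (by simpa [hq, ENNReal.toReal_ofReal hp0.le] using hp0)]
      simp [hq, ENNReal.toReal_ofReal hp0.le, Fin.sum_univ_two, Real.norm_eq_abs]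
    have hcoord : ∀ (y : PiLp q (fun _ : Fin 2 => ℝ)) (i : Fin 2), |y i| ≤ ‖y‖ := by
      intro y i
      have h1 : |y i| = (|y i| ^ p) ^ (1/p) := by
        rw [← Real.rpow_mul (abs_nonneg _), mul_one_div, div_self hp0.ne', Real.rpow_one]
      rw [hnormV y, h1]
      have h2 : |y i| ^ p ≤ |y 0| ^ p + |y 1| ^ p := by
        have n0 : (0:ℝ) ≤ |y 0| ^ p := Real.rpow_nonneg (abs_nonneg _) _
        have n1 : (0:ℝ) ≤ |y 1| ^ p := Real.rpow_nonneg (abs_nonneg _) _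
        fin_cases i <;> simp <;> linarith
      exact Real.rpow_le_rpow (Real.rpow_nonneg (abs_nonneg _) _) h2 (by positivity)
    have hTnorm : ‖T‖ ≤ S := by
      refine ContinuousMultilinearMap.opNorm_le_bound hS0.le fun x => ?_
      have hsplit : ∀ (f : Fin (k+2) → ℝ), (∏ s, f s)
          = f 0 * (f 1 * ∏ s ∈ (Finset.univ.erase 0).erase 1, f s) := by
        intro f
        rw [← Finset.mul_prod_erase Finset.univ f (Finset.mem_univ 0),
          ← Finset.mul_prod_erase _ f
            (Finset.mem_erase.2 ⟨h01.symm, Finset.mem_univ 1⟩)]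
      set R : ℝ := ∏ s ∈ (Finset.univ.erase (0 : Fin (k+2))).erase 1, x s 0 with hR
      have e00 : eps 0 0 = 1 := by simp [heps]
      have e01 : eps 0 1 = 1 := by simp [heps]
      have e10 : eps 1 0 = 1 := by simp [heps]
      have e11 : eps 1 1 = -1 := by simp [heps]
      have hTx : T x = ((x 0 0 + x 0 1) * (x 1 0) + (x 0 0 - x 0 1) * (x 1 1)) * R := by
        rw [hTapp]
        have hpr : ∀ a b : Fin 2, (∏ s, x s (pat a b s)) = x 0 a * (x 1 b * R) := by
          intro a b
          rw [hsplit (fun s => x s (pat a b s)), pat0, pat1, hR]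
          congr 2
          refine Finset.prod_congr rfl fun s hs => ?_
          have hs1 : s ≠ 1 := (Finset.mem_erase.1 hs).1
          have hs0 : s ≠ 0 := (Finset.mem_erase.1 (Finset.mem_erase.1 hs).2).1
          rw [patrest a b s hs0 hs1]
        simp only [hpr]
        rw [Fin.sum_univ_two, Fin.sum_univ_two, Fin.sum_univ_two, e00, e01, e10, e11]
        ring
      have hconj : Real.HolderConjugate (p/(p-1)) p :=
        ((Real.holderConjugate_iff_eq_conjExponent hp).2 rfl).symm
      have holder : |x 0 0 + x 0 1| * |x 1 0| + |x 0 0 - x 0 1| * |x 1 1|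
          ≤ (|x 0 0 + x 0 1| ^ (p/(p-1)) + |x 0 0 - x 0 1| ^ (p/(p-1))) ^ ((p-1)/p)
            * (|x 1 0| ^ p + |x 1 1| ^ p) ^ (1/p) := by
        have h := Real.inner_le_Lp_mul_Lq (s := Finset.univ)
          (f := ![|x 0 0 + x 0 1|, |x 0 0 - x 0 1|]) (g := ![|x 1 0|, |x 1 1|]) hconj
        have hexp : 1/(p/(p-1)) = (p-1)/p := one_div_div p (p-1)
        rw [hexp] at h
        simpa [Fin.sum_univ_two, abs_abs] using h
      have hcore := core hp (x 0 0) (x 0 1)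
      rw [← hSfio] at hcore
      have hB : |(x 0 0 + x 0 1) * (x 1 0) + (x 0 0 - x 0 1) * (x 1 1)|
          ≤ S * (‖x 0‖ * ‖x 1‖) := by
        have tri : |(x 0 0 + x 0 1) * (x 1 0) + (x 0 0 - x 0 1) * (x 1 1)|
            ≤ |x 0 0 + x 0 1| * |x 1 0| + |x 0 0 - x 0 1| * |x 1 1| := by
          calc |(x 0 0 + x 0 1) * (x 1 0) + (x 0 0 - x 0 1) * (x 1 1)|
              ≤ |(x 0 0 + x 0 1) * (x 1 0)| + |(x 0 0 - x 0 1) * (x 1 1)| := abs_add_le _ _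
            _ = |x 0 0 + x 0 1| * |x 1 0| + |x 0 0 - x 0 1| * |x 1 1| := by
                rw [abs_mul, abs_mul]
        have step : (|x 0 0 + x 0 1| ^ (p/(p-1)) + |x 0 0 - x 0 1| ^ (p/(p-1))) ^ ((p-1)/p)
              * (|x 1 0| ^ p + |x 1 1| ^ p) ^ (1/p)
            ≤ (S * (|x 0 0| ^ p + |x 0 1| ^ p) ^ (1/p))
              * (|x 1 0| ^ p + |x 1 1| ^ p) ^ (1/p) := by
          apply mul_le_mul_of_nonneg_right hcore
          positivity
        rw [hnormV (x 0), hnormV (x 1)]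
        calc |(x 0 0 + x 0 1) * (x 1 0) + (x 0 0 - x 0 1) * (x 1 1)|
            ≤ _ := tri
          _ ≤ _ := holder
          _ ≤ _ := step
          _ = S * ((|x 0 0| ^ p + |x 0 1| ^ p) ^ (1/p)
              * (|x 1 0| ^ p + |x 1 1| ^ p) ^ (1/p)) := by ring
      have hRb : |R| ≤ ∏ s ∈ (Finset.univ.erase (0 : Fin (k+2))).erase 1, ‖x s‖ := by
        rw [hR, Finset.abs_prod]
        exact Finset.prod_le_prod (fun s _ => abs_nonneg _) (fun s _ => hcoord (x s) 0)
      have hprodnorm : (∏ s, ‖x s‖)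
          = ‖x 0‖ * (‖x 1‖ * ∏ s ∈ (Finset.univ.erase (0 : Fin (k+2))).erase 1, ‖x s‖) :=
        hsplit _
      rw [Real.norm_eq_abs, hTx, abs_mul, hprodnorm]
      have hRrest : (0:ℝ) ≤ ∏ s ∈ (Finset.univ.erase (0 : Fin (k+2))).erase 1, ‖x s‖ :=
        Finset.prod_nonneg fun s _ => norm_nonneg _
      calc |(x 0 0 + x 0 1) * (x 1 0) + (x 0 0 - x 0 1) * (x 1 1)| * |R|
          ≤ (S * (‖x 0‖ * ‖x 1‖))
            * ∏ s ∈ (Finset.univ.erase (0 : Fin (k+2))).erase 1, ‖x s‖ :=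
            mul_le_mul hB hRb (abs_nonneg _) (by positivity)
        _ = S * (‖x 0‖ * (‖x 1‖ * ∏ s ∈ (Finset.univ.erase (0 : Fin (k+2))).erase 1, ‖x s‖)) := by
            ring
    have h1 := hineq 2 T
    rw [hsum] at h1
    exact h1.trans hTnorm
  -- arithmetic conclusion
  have h2L : 2 / η ≤ L := by
    have h42 : (2:ℝ) ^ (((2:ℕ)):ℝ) = 4 := by
      rw [Real.rpow_natCast]; norm_num
    have h4 : (4:ℝ) ^ (1/η) = 2 ^ (2/η) := by
      rw [← h42, ← Real.rpow_mul (by norm_num : (0:ℝ) ≤ 2)]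
      congr 1
      push_cast
      ring
    rw [h4] at key
    have hkey2 : (2:ℝ) ^ (2/η) ≤ 2 ^ L := by
      rwa [hLdef, Real.rpow_logb (by norm_num) (by norm_num) hS0]
    exact (Real.rpow_le_rpow_left_iff one_lt_two).1 hkey2
  have hηL : 2 / L ≤ η := by
    rw [div_le_iff₀ hL0]
    rw [div_le_iff₀ hη0] at h2L
    linarith [mul_comm L η]
  have hη2 : 2 < η := by
    have : 2 / L > 2 := by
      rw [gt_iff_lt, lt_div_iff₀ hL0]
      linarith
    linarith
  have hm2 : (0:ℝ) ≤ (m:ℝ) - 2 := by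
    have : (2:ℝ) ≤ (m:ℝ) := by exact_mod_cast hm
    linarith
  have hD : 0 < L + ((m:ℝ) - 2) := by linarith
  constructor
  · rw [div_le_iff₀ hD]
    have hLη : 2 ≤ L * η := by
      rw [div_le_iff₀ hη0] at h2L
      linarith
    nlinarith
  · rw [lt_div_iff₀ hD]
    linarith
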